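/- Under the assumptions of the previous statement, for any finite unlabeled set 𝒰 of size n and finite labeled set ℒK on which both h and h' are ε-close to f in loss L, the empirical average (1/n)·Σ_{x ∈ 𝒰} L(h(x), h'(x)) ≤ (2kμ/n)·Σ_{x ∈ 𝒰} min_{x' ∈ ℒK} d(x, x') + 2ε. -/

import Mathlib

/-- Empirical average version of the pointwise bound. -/
theorem stmt2 {X : Type*} [MetricSpace X] (k μ ε : ℝ) (L : ℝ → ℝ → ℝ)
    (hLnonneg : ∀ y y', 0 ≤ L y y')
    (hLsymm : ∀ y y', L y y' = L y' y)
    (hLtri : ∀ a b c, L a c ≤ L a b + L b c)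
    (hLlip : ∀ y y', L y y' ≤ μ * |y - y'|)
    (h h' f : X → ℝ)
    (hh : ∀ a b, |h a - h b| ≤ k * dist a b)
    (hh' : ∀ a b, |h' a - h' b| ≤ k * dist a b)
    (LK : Finset X) (hLK : LK.Nonempty) (U : Finset X)
    (he1 : ∀ x' ∈ LK, L (h x') (f x') < ε)
    (he2 : ∀ x' ∈ LK, L (h' x') (f x') < ε) :
    (∑ x ∈ U, L (h x) (h' x)) / U.card ≤
      (2 * k * μ / U.card) * ∑ x ∈ U, LK.inf' hLK (fun x' => dist x x') + 2 * ε := by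
  have hμ : 0 ≤ μ := by
    have := (hLnonneg 0 1).trans (hLlip 0 1)
    simpa using this
  have hε : 0 < ε := by
    obtain ⟨x', hx'⟩ := hLK
    exact lt_of_le_of_lt (hLnonneg _ _) (he1 x' hx')
  -- pointwise bound
  have key : ∀ x : X, L (h x) (h' x) ≤
      2 * k * μ * LK.inf' hLK (fun x' => dist x x') + 2 * ε := by
    intro x
    obtain ⟨x', hx', hmin⟩ := LK.exists_mem_eq_inf' hLK (fun x' => dist x x')
    have h1 : L (h x) (h x') ≤ μ * (k * dist x x') := by
      calc L (h x) (h x') ≤ μ * |h x - h x'| := hLlip _ _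
        _ ≤ μ * (k * dist x x') := mul_le_mul_of_nonneg_left (hh x x') hμ
    have h2 : L (h' x') (h' x) ≤ μ * (k * dist x x') := by
      calc L (h' x') (h' x) ≤ μ * |h' x' - h' x| := hLlip _ _
        _ ≤ μ * (k * dist x' x) :=
          mul_le_mul_of_nonneg_left (hh' x' x) hμ
        _ = μ * (k * dist x x') := by rw [dist_comm]
    have h3 : L (f x') (h' x') < ε := by rw [hLsymm]; exact he2 x' hx'
    have tri : L (h x) (h' x) ≤
        L (h x) (h x') + (L (h x') (f x') + (L (f x') (h' x') + L (h' x') (h' x))) := by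
      calc L (h x) (h' x) ≤ L (h x) (h x') + L (h x') (h' x) := hLtri _ _ _
        _ ≤ L (h x) (h x') + (L (h x') (f x') + L (f x') (h' x)) :=
            add_le_add_right (hLtri _ _ _) _
        _ ≤ _ := by
            refine add_le_add_right (add_le_add_right (hLtri _ _ _) _) _
    have := tri.trans (by
      have := add_le_add h1 (add_le_add (le_of_lt (he1 x' hx'))
        (add_le_add (le_of_lt h3) h2))
      exact this)
    calc L (h x) (h' x) ≤ μ * (k * dist x x') + (ε + (ε + μ * (k * dist x x'))) := this
      _ = 2 * k * μ * dist x x' + 2 * ε := by ring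
      _ = 2 * k * μ * LK.inf' hLK (fun x' => dist x x') + 2 * ε := by rw [← hmin]
  rcases U.eq_empty_or_nonempty with rfl | hU
  · simp; positivity
  · have hn : (0 : ℝ) < U.card := by exact_mod_cast Finset.card_pos.mpr hU
    have hsum : (∑ x ∈ U, L (h x) (h' x)) ≤
        2 * k * μ * ∑ x ∈ U, LK.inf' hLK (fun x' => dist x x') + 2 * ε * U.card := by
      calc (∑ x ∈ U, L (h x) (h' x))
          ≤ ∑ x ∈ U, (2 * k * μ * LK.inf' hLK (fun x' => dist x x') + 2 * ε) :=
            Finset.sum_le_sum fun x _ => key x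
        _ = 2 * k * μ * ∑ x ∈ U, LK.inf' hLK (fun x' => dist x x') + 2 * ε * U.card := by
            rw [Finset.sum_add_distrib, ← Finset.mul_sum, Finset.sum_const, nsmul_eq_mul]
            ring
    refine ((div_le_div_iff_of_pos_right hn).mpr hsum).trans_eq ?_
    field_simp
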